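/- Let k ≥ 2 and let L ⊆ (Σ_k²)^* be a regular language (accepted by a DFA with n states) such that [π₂(x)]_k > 0 for all x ∈ L. Let α = sup { quo_k(x) : x ∈ L } and suppose α < ∞. Then α is rational. Moreover, α lies in the finite set S₁ ∪ S₂, where S₁ = { quo_k(x) : x ∈ L, |x| < n } and S₂ = { ([π₁(uv)]_k − [π₁(u)]_k) / ([π₂(uv)]_k − [π₂(u)]_k) : |uv| ≤ n, |v| ≥ 1, ∃w, uvw ∈ L, and [π₂(uv)]_k > [π₂(u)]_k }. -/

import Mathlib

open Computability Filter


/-- The base-k value of a word of digits, most significant digit first. -/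
def baseVal (k : ℕ) (w : List (Fin k)) : ℕ :=
  w.foldl (fun acc d => acc * k + d.val) 0

/-- The quotient of the base-k values of the two coordinates of a word over Σ_k². -/
noncomputable def quoVal (k : ℕ) (x : List (Fin k × Fin k)) : ℝ :=
  (baseVal k (x.map Prod.fst) : ℝ) / (baseVal k (x.map Prod.snd) : ℝ)

lemma quoVal_def (k : ℕ) (x : List (Fin k × Fin k)) :
    quoVal k x = (baseVal k (x.map Prod.fst) : ℝ) / (baseVal k (x.map Prod.snd) : ℝ) := rfl

lemma baseVal_go (k : ℕ) (y : List (Fin k)) : ∀ a : ℕ,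
    y.foldl (fun acc d => acc * k + d.val) a = a * k ^ y.length + baseVal k y := by
  induction y with
  | nil => intro a; simp [baseVal]
  | cons d y ih =>
    intro a
    have hd : baseVal k (d :: y) = y.foldl (fun acc d => acc * k + d.val) d.val := by
      simp [baseVal]
    simp only [List.foldl_cons, List.length_cons, hd]
    rw [ih, ih d.val]
    ring

lemma baseVal_append (k : ℕ) (x y : List (Fin k)) :
    baseVal k (x ++ y) = baseVal k x * k ^ y.length + baseVal k y := by
  unfold baseVal
  rw [List.foldl_append]
  exact baseVal_go k y _

lemma baseValMap_append {A : Type*} (k : ℕ) (f : A → Fin k) (x y : List A) :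
    baseVal k ((x ++ y).map f) = baseVal k (x.map f) * k ^ y.length + baseVal k (y.map f) := by
  rw [List.map_append, baseVal_append, List.length_map]

lemma baseVal_le_append {A : Type*} (k : ℕ) (hk : 1 ≤ k) (f : A → Fin k) (x y : List A) :
    baseVal k (x.map f) ≤ baseVal k ((x ++ y).map f) := by
  rw [baseValMap_append]
  calc baseVal k (x.map f) = baseVal k (x.map f) * 1 := by ring
  _ ≤ baseVal k (x.map f) * k ^ y.length + baseVal k (y.map f) := by
      have : (1:ℕ) ≤ k ^ y.length := Nat.one_le_pow _ _ hk
      nlinarith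

lemma pump_step {A : Type*} (k : ℕ) (f : A → Fin k) (u v w : List A) (i : ℕ) :
    baseVal k ((u ++ (List.replicate (i+1) v).flatten ++ w).map f)
      + baseVal k (u.map f) * k ^ w.length * k ^ (i * v.length)
  = baseVal k ((u ++ (List.replicate i v).flatten ++ w).map f)
      + baseVal k ((u ++ v).map f) * k ^ w.length * k ^ (i * v.length) := by
  have h1 : (List.replicate (i+1) v).flatten = v ++ (List.replicate i v).flatten := by
    simp [List.replicate_succ]
  have hlen : ((List.replicate i v).flatten).length = i * v.length := by simp
  rw [h1, show u ++ (v ++ (List.replicate i v).flatten) = (u ++ v) ++ (List.replicate i v).flatten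
    from (List.append_assoc u v _).symm]
  simp only [baseValMap_append, hlen]
  ring

lemma pump_rec {A : Type*} (k : ℕ) (f : A → Fin k) (u v w : List A) (i : ℕ) :
    (baseVal k ((u ++ (List.replicate (i+1) v).flatten ++ w).map f) : ℝ)
      = baseVal k ((u ++ (List.replicate i v).flatten ++ w).map f)
        + ((baseVal k ((u ++ v).map f) : ℝ) - baseVal k (u.map f))
          * (k:ℝ) ^ w.length * (k:ℝ) ^ (i * v.length) := by
  have h2 := congrArg (Nat.cast (R := ℝ)) (pump_step k f u v w i)
  push_cast at h2
  linear_combination h2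

lemma pumped_mem {A : Type*} {l : Language A} {u v w : List A}
    (h : {u} * {v}∗ * {w} ≤ l) (i : ℕ) : u ++ (List.replicate i v).flatten ++ w ∈ l := by
  apply h
  refine Language.mem_mul.2 ⟨u ++ (List.replicate i v).flatten, ?_, w, rfl, rfl⟩
  refine Language.mem_mul.2 ⟨u, rfl, _, Language.join_mem_kstar ?_, rfl⟩
  intro y hy
  exact List.eq_of_mem_replicate hy

lemma mediant_le {a b P Q m : ℝ} (hb : 0 < b) (hQ : 0 < Q) (h1 : a / b ≤ m) (h2 : P / Q ≤ m) :
    (a + P) / (b + Q) ≤ m := by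
  rw [div_le_iff₀ hb] at h1
  rw [div_le_iff₀ hQ] at h2
  rw [div_le_iff₀ (by linarith)]
  linarith

set_option maxHeartbeats 2000000 in
theorem sup_quotient_rational (k : ℕ) (hk : 2 ≤ k) (σ : Type) [Fintype σ] (n : ℕ)
    (hn : Fintype.card σ = n) (M : DFA (Fin k × Fin k) σ)
    (L : Language (Fin k × Fin k)) (hL : M.accepts = L)
    (hlead : ∀ x ∈ L, ∀ (d : Fin k × Fin k) (y : List (Fin k × Fin k)),
      x = d :: y → d.1.val ≠ 0 ∨ d.2.val ≠ 0)
    (hpos : ∀ x ∈ L, 0 < baseVal k (x.map Prod.snd))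
    (hne : ∃ x, x ∈ L)
    (hbdd : BddAbove { r : ℝ | ∃ x ∈ L, r = quoVal k x }) :
    (∃ q : ℚ, (q : ℝ) = sSup { r : ℝ | ∃ x ∈ L, r = quoVal k x }) ∧
    sSup { r : ℝ | ∃ x ∈ L, r = quoVal k x } ∈
      ({ r : ℝ | ∃ x ∈ L, x.length < n ∧ r = quoVal k x } ∪
       { r : ℝ | ∃ u v : List (Fin k × Fin k), (u ++ v).length ≤ n ∧ 1 ≤ v.length ∧
          (∃ w, u ++ v ++ w ∈ L) ∧
          baseVal k (u.map Prod.snd) < baseVal k ((u ++ v).map Prod.snd) ∧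
          r = ((baseVal k ((u ++ v).map Prod.fst) : ℝ) - (baseVal k (u.map Prod.fst) : ℝ)) /
              ((baseVal k ((u ++ v).map Prod.snd) : ℝ) - (baseVal k (u.map Prod.snd) : ℝ)) }) := by
  subst hn hL
  have hk1 : (1:ℕ) ≤ k := by omega
  have hkR : (1:ℝ) ≤ (k:ℝ) := by exact_mod_cast hk1
  set S : Set ℝ := { r : ℝ | ∃ x ∈ M.accepts, r = quoVal k x } with hSdef
  set α : ℝ := sSup S with hαdef
  set C1 : Set ℝ := { r : ℝ | ∃ x ∈ M.accepts, x.length < Fintype.card σ ∧ r = quoVal k x }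
    with hC1def
  set C2 : Set ℝ := { r : ℝ | ∃ u v : List (Fin k × Fin k),
      (u ++ v).length ≤ Fintype.card σ ∧ 1 ≤ v.length ∧
      (∃ w, u ++ v ++ w ∈ M.accepts) ∧
      baseVal k (u.map Prod.snd) < baseVal k ((u ++ v).map Prod.snd) ∧
      r = ((baseVal k ((u ++ v).map Prod.fst) : ℝ) - (baseVal k (u.map Prod.fst) : ℝ)) /
          ((baseVal k ((u ++ v).map Prod.snd) : ℝ) - (baseVal k (u.map Prod.snd) : ℝ)) }
    with hC2def
  have hmemS : ∀ x ∈ M.accepts, quoVal k x ∈ S := by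
    intro x hx; rw [hSdef]; exact ⟨x, hx, rfl⟩
  have hleα : ∀ x ∈ M.accepts, quoVal k x ≤ α := fun x hx => le_csSup hbdd (hmemS x hx)
  -- main induction
  have key : ∀ N : ℕ, ∀ x ∈ M.accepts, x.length ≤ N →
      ∃ c ∈ C1 ∪ C2, quoVal k x ≤ c ∧ c ≤ α := by
    intro N
    induction N with
    | zero =>
      intro x hx hlen
      exfalso
      have h0 := hpos x hx
      have hx0 : x = [] := List.length_eq_zero_iff.mp (Nat.le_zero.mp hlen)
      rw [hx0] at h0
      simp [baseVal] at h0
    | succ N ih =>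
      intro x hx hlen
      by_cases hshort : x.length < Fintype.card σ
      · refine ⟨quoVal k x, Or.inl ?_, le_refl _, hleα x hx⟩
        rw [hC1def]; exact ⟨x, hx, hshort, rfl⟩
      · push_neg at hshort
        obtain ⟨u, v, w, hxuvw, hlen2, hvne, hsub⟩ := M.pumping_lemma hx hshort
        have hmem : ∀ i, u ++ (List.replicate i v).flatten ++ w ∈ M.accepts :=
          fun i => pumped_mem hsub i
        have hvpos : 1 ≤ v.length := List.length_pos_iff.mpr hvne
        obtain ⟨A, hA⟩ : ∃ A : ℕ → ℕ, ∀ i,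
            A i = baseVal k ((u ++ (List.replicate i v).flatten ++ w).map Prod.fst) :=
          ⟨_, fun i => rfl⟩
        obtain ⟨B, hB⟩ : ∃ B : ℕ → ℕ, ∀ i,
            B i = baseVal k ((u ++ (List.replicate i v).flatten ++ w).map Prod.snd) :=
          ⟨_, fun i => rfl⟩
        have hBpos : ∀ i, 0 < B i := by intro i; rw [hB]; exact hpos _ (hmem i)
        set p : ℝ := (baseVal k ((u ++ v).map Prod.fst) : ℝ) - (baseVal k (u.map Prod.fst) : ℝ)
          with hpdef
        set q : ℝ := (baseVal k ((u ++ v).map Prod.snd) : ℝ) - (baseVal k (u.map Prod.snd) : ℝ)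
          with hqdef
        have hp0 : 0 ≤ p := by
          rw [hpdef]
          have := baseVal_le_append k hk1 Prod.fst u v
          have : (baseVal k (u.map Prod.fst) : ℝ) ≤ baseVal k ((u ++ v).map Prod.fst) := by
            exact_mod_cast this
          linarith
        have hq0 : 0 ≤ q := by
          rw [hqdef]
          have := baseVal_le_append k hk1 Prod.snd u v
          have : (baseVal k (u.map Prod.snd) : ℝ) ≤ baseVal k ((u ++ v).map Prod.snd) := by
            exact_mod_cast this
          linarith
        have hrecA : ∀ i, (A (i+1) : ℝ)
            = A i + p * (k:ℝ) ^ w.length * (k:ℝ) ^ (i * v.length) := by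
          intro i
          simp only [hA, hpdef]
          exact pump_rec k Prod.fst u v w i
        have hrecB : ∀ i, (B (i+1) : ℝ)
            = B i + q * (k:ℝ) ^ w.length * (k:ℝ) ^ (i * v.length) := by
          intro i
          simp only [hB, hqdef]
          exact pump_rec k Prod.snd u v w i
        have hKpos : (0:ℝ) < (k:ℝ) ^ w.length := by positivity
        have hK1 : (1:ℝ) ≤ (k:ℝ) ^ w.length := one_le_pow₀ hkR
        have hmem0 : u ++ w ∈ M.accepts := by simpa using hmem 0
        have hquo0 : quoVal k (u ++ w) = (A 0 : ℝ) / (B 0 : ℝ) := by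
          rw [quoVal_def, hA, hB]; simp
        have hquox : quoVal k x = (A 1 : ℝ) / (B 1 : ℝ) := by
          rw [quoVal_def, hA, hB, hxuvw]; simp
        have hquoi : ∀ i, ((A i : ℝ) / (B i : ℝ)) ∈ S := by
          intro i
          rw [hSdef]
          exact ⟨_, hmem i, by rw [quoVal_def, hA, hB]⟩
        have hquoiα : ∀ i, (A i : ℝ) / (B i : ℝ) ≤ α := fun i => le_csSup hbdd (hquoi i)
        have hlenuw : (u ++ w).length ≤ N := by
          rw [hxuvw] at hlen
          simp only [List.length_append] at hlen ⊢
          omega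
        rcases eq_or_lt_of_le hq0 with hqz | hqpos
        · -- q = 0 : B is constant
          have hBconst : ∀ i, (B i : ℝ) = B 0 := by
            intro i
            induction i with
            | zero => rfl
            | succ j ihj => rw [hrecB j, ← hqz, ihj]; ring
          rcases eq_or_lt_of_le hp0 with hpz | hppos
          · -- p = 0 too : quoVal x = quoVal (u ++ w)
            have hA1 : (A 1 : ℝ) = A 0 := by
              rw [hrecA 0, ← hpz]; ring
            have hB1 : (B 1 : ℝ) = B 0 := hBconst 1
            obtain ⟨c, hcC, hcge, hcα⟩ := ih (u ++ w) hmem0 hlenuw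
            refine ⟨c, hcC, ?_, hcα⟩
            rw [hquox, hA1, hB1, ← hquo0]
            exact hcge
          · -- p > 0 : contradiction with boundedness
            exfalso
            have hAgrow : ∀ i, (A 0 : ℝ) + p * i ≤ A i := by
              intro i
              induction i with
              | zero => simp
              | succ j ihj =>
                rw [hrecA j]
                have h1 : (1:ℝ) ≤ (k:ℝ) ^ (j * v.length) := one_le_pow₀ hkR
                have : p * 1 * 1 ≤ p * (k:ℝ) ^ w.length * (k:ℝ) ^ (j * v.length) := by
                  apply mul_le_mul (by nlinarith) h1 (by norm_num) (by positivity)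
                push_cast
                push_cast at ihj
                nlinarith
            have hB0pos : (0:ℝ) < B 0 := by exact_mod_cast hBpos 0
            obtain ⟨i, hi⟩ := exists_nat_gt ((α * B 0 - A 0) / p)
            have h1 : (α * B 0 - A 0) < p * i := by
              rw [div_lt_iff₀ hppos] at hi
              linarith
            have h2 : (A i : ℝ) ≤ α * B 0 := by
              have := hquoiα i
              rw [hBconst i] at this
              rw [div_le_iff₀ hB0pos] at this
              exact this
            have := hAgrow i
            linarith
        · -- q > 0 : the interesting case
          set δ : ℝ := p / q with hδdef
          have hδq : δ * q = p := div_mul_cancel₀ p (ne_of_gt hqpos)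
          have hconst : ∀ i, δ * B i - A i = δ * B 0 - A 0 := by
            intro i
            induction i with
            | zero => rfl
            | succ j ihj =>
              rw [hrecA j, hrecB j]
              linear_combination ihj + ((k:ℝ) ^ w.length * (k:ℝ) ^ (j * v.length)) * hδq
          have hquoδ : ∀ i, (A i : ℝ) / (B i : ℝ) = δ - (δ * B 0 - A 0) / B i := by
            intro i
            have hBipos : (0:ℝ) < B i := by exact_mod_cast hBpos i
            field_simp
            linear_combination - hconst i
          have hBgrow : ∀ i, (B 0 : ℝ) + q * i ≤ B i := by
            intro i
            induction i with
            | zero => simp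
            | succ j ihj =>
              rw [hrecB j]
              have h1 : (1:ℝ) ≤ (k:ℝ) ^ (j * v.length) := one_le_pow₀ hkR
              have : q * 1 * 1 ≤ q * (k:ℝ) ^ w.length * (k:ℝ) ^ (j * v.length) := by
                apply mul_le_mul (by nlinarith) h1 (by norm_num) (by positivity)
              push_cast
              push_cast at ihj
              nlinarith
          have hBtop : Tendsto (fun i : ℕ => (B i : ℝ)) atTop atTop := by
            apply tendsto_atTop_mono hBgrow
            exact tendsto_atTop_add_const_left _ _
              (tendsto_natCast_atTop_atTop.const_mul_atTop hqpos)
          have htq : Tendsto (fun i : ℕ => (A i : ℝ) / (B i : ℝ)) atTop (nhds δ) := by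
            have h0 : Tendsto (fun i : ℕ => (δ * B 0 - A 0) / (B i : ℝ)) atTop (nhds 0) :=
              Tendsto.div_atTop tendsto_const_nhds hBtop
            have h1 := (tendsto_const_nhds (x := δ) (f := atTop)).sub h0
            rw [sub_zero] at h1
            exact h1.congr fun i => (hquoδ i).symm
          have hδα : δ ≤ α :=
            le_of_tendsto htq (Eventually.of_forall fun i => hquoiα i)
          have hδC2 : δ ∈ C2 := by
            rw [hC2def]
            refine ⟨u, v, ?_, hvpos, ⟨w, by rw [← hxuvw]; exact hx⟩, ?_, ?_⟩
            · rw [List.length_append]; exact hlen2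
            · have : (0:ℝ) < q := hqpos
              rw [hqdef] at this
              have : (baseVal k (u.map Prod.snd) : ℝ) < baseVal k ((u ++ v).map Prod.snd) := by
                linarith
              exact_mod_cast this
            · rw [hδdef, hpdef, hqdef]
          -- mediant bound
          have hB0pos : (0:ℝ) < B 0 := by exact_mod_cast hBpos 0
          have hmed : quoVal k x ≤ max ((A 0 : ℝ) / (B 0 : ℝ)) δ := by
            rw [hquox]
            have e1 := hrecA 0
            have e2 := hrecB 0
            simp only [Nat.zero_mul, pow_zero, mul_one] at e1 e2
            rw [e1, e2]
            apply mediant_le hB0pos (mul_pos hqpos hKpos) (le_max_left _ _)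
            have : p * (k:ℝ) ^ w.length / (q * (k:ℝ) ^ w.length) = p / q := by
              rw [mul_comm p _, mul_comm q _]
              exact mul_div_mul_left p q (ne_of_gt hKpos)
            rw [this, ← hδdef]
            exact le_max_right _ _
          obtain ⟨c, hcC, hcge, hcα⟩ := ih (u ++ w) hmem0 hlenuw
          refine ⟨max c δ, ?_, ?_, max_le hcα hδα⟩
          · rcases max_choice c δ with h | h <;> rw [h]
            · exact hcC
            · exact Or.inr hδC2
          · refine hmed.trans (max_le_max ?_ (le_refl δ))
            rw [← hquo0]
            exact hcge
  -- finiteness of candidate set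
  have hC1fin : C1.Finite := by
    apply Set.Finite.subset
      ((List.finite_length_lt (Fin k × Fin k) (Fintype.card σ)).image (quoVal k))
    rw [hC1def]
    rintro r ⟨x, _, hlenx, rfl⟩
    exact ⟨x, hlenx, rfl⟩
  have hC2fin : C2.Finite := by
    apply Set.Finite.subset (Set.Finite.image
      (fun pr : List (Fin k × Fin k) × List (Fin k × Fin k) =>
        ((baseVal k ((pr.1 ++ pr.2).map Prod.fst) : ℝ) - (baseVal k (pr.1.map Prod.fst) : ℝ)) /
        ((baseVal k ((pr.1 ++ pr.2).map Prod.snd) : ℝ) - (baseVal k (pr.1.map Prod.snd) : ℝ)))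
      ((List.finite_length_le (Fin k × Fin k) (Fintype.card σ)).prod
        (List.finite_length_le (Fin k × Fin k) (Fintype.card σ))))
    rw [hC2def]
    rintro r ⟨u, v, hlenuv, _, _, _, rfl⟩
    refine ⟨(u, v), Set.mem_prod.2 ⟨?_, ?_⟩, rfl⟩
    · simp only [List.length_append] at hlenuv
      simpa using Nat.le_trans (Nat.le_add_right _ _) hlenuv
    · simp only [List.length_append] at hlenuv
      simpa using Nat.le_trans (Nat.le_add_left _ _) hlenuv
  obtain ⟨x0, hx0⟩ := hne
  set C' : Set ℝ := (C1 ∪ C2) ∩ {c | c ≤ α} with hC'def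
  have hC'fin : C'.Finite := (hC1fin.union hC2fin).inter_of_left _
  have hC'ne : C'.Nonempty := by
    obtain ⟨c, hc, _, hcα⟩ := key x0.length x0 hx0 le_rfl
    exact ⟨c, hc, hcα⟩
  have hmmem := hC'ne.csSup_mem hC'fin
  have hSne : S.Nonempty := ⟨quoVal k x0, hmemS x0 hx0⟩
  have hαle : α ≤ sSup C' := by
    rw [hαdef]
    apply csSup_le hSne
    intro r hr
    rw [hSdef] at hr
    obtain ⟨x, hx, rfl⟩ := hr
    obtain ⟨c, hc, hrc, hcα⟩ := key x.length x hx le_rfl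
    exact hrc.trans (le_csSup hC'fin.bddAbove ⟨hc, hcα⟩)
  have hαeq : α = sSup C' := le_antisymm hαle hmmem.2
  have hαC : α ∈ C1 ∪ C2 := by rw [hαeq]; exact hmmem.1
  constructor
  · rcases hαC with hc1 | hc2
    · rw [hC1def] at hc1
      obtain ⟨x, _, _, hxe⟩ := hc1
      refine ⟨(baseVal k (x.map Prod.fst) : ℚ) / (baseVal k (x.map Prod.snd) : ℚ), ?_⟩
      rw [hxe, quoVal_def]
      push_cast
      ring
    · rw [hC2def] at hc2
      obtain ⟨u, v, _, _, _, _, hxe⟩ := hc2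
      refine ⟨((baseVal k ((u ++ v).map Prod.fst) : ℚ) - (baseVal k (u.map Prod.fst) : ℚ)) /
        ((baseVal k ((u ++ v).map Prod.snd) : ℚ) - (baseVal k (u.map Prod.snd) : ℚ)), ?_⟩
      rw [hxe]
      push_cast
      ring
  · exact hαC
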